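/- If a hyperplane arrangement A of n hyperplanes in R^m separates a packing of unit balls (any two balls in the packing are separated by at least one hyperplane of A), then the number of balls in the packing is at most the number of regions of A, and hence at most ∑_{i=0}^{m} C(n,i). -/

import Mathlib

open Set Finset Module

lemma pascal_sum (n d : ℕ) :
    ∑ i ∈ Finset.range (d+1), (n+1).choose i
      = ∑ i ∈ Finset.range (d+1), n.choose i + ∑ i ∈ Finset.range d, n.choose i := by
  induction d with
  | zero => simp
  | succ d ih =>
      rw [Finset.sum_range_succ, ih,
        Finset.sum_range_succ (f := fun i => n.choose i) (n := d+1),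
        Finset.sum_range_succ (f := fun i => n.choose i) (n := d),
        Nat.choose_succ_succ]
      simp only [Nat.succ_eq_add_one]
      omega

lemma choose_sum_mono (n d : ℕ) :
    ∑ i ∈ Finset.range (d+1), n.choose i ≤ ∑ i ∈ Finset.range (d+1), (n+1).choose i := by
  rw [pascal_sum]; exact Nat.le_add_right _ _

variable {E : Type*} [NormedAddCommGroup E] [NormedSpace ℝ E] [FiniteDimensional ℝ E]

/-- Key combinatorial bound: the number of sign vectors of `n` affine functionals realized
by points of an affine subspace of dimension `≤ d` is at most `∑_{i≤d} C(n,i)`. -/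
lemma realized_ncard_le : ∀ (n : ℕ) (g : Fin n → E →ᵃ[ℝ] ℝ) (d : ℕ) (A : AffineSubspace ℝ E),
    finrank ℝ A.direction ≤ d →
    {s : Fin n → Bool | ∃ x ∈ A, ∀ k, g k x ≠ 0 ∧ s k = decide (0 < g k x)}.ncard
      ≤ ∑ i ∈ Finset.range (d+1), n.choose i := by
  intro n
  induction n with
  | zero =>
      intro g d A _
      calc {s : Fin 0 → Bool | ∃ x ∈ A, ∀ k, g k x ≠ 0 ∧ s k = decide (0 < g k x)}.ncard
          ≤ (Set.univ : Set (Fin 0 → Bool)).ncard :=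
            Set.ncard_le_ncard (Set.subset_univ _) Set.finite_univ
        _ = 1 := by simp [Set.ncard_univ]
        _ ≤ ∑ i ∈ Finset.range (d+1), Nat.choose 0 i := by
            refine Finset.single_le_sum (f := fun i => Nat.choose 0 i) (fun _ _ => Nat.zero_le _)
              (Finset.mem_range.mpr (Nat.succ_pos d)) |>.trans_eq' ?_
            simp
  | succ n ih =>
      intro g d A hA
      classical
      set T : Set (Fin (n+1) → Bool) :=
        {s | ∃ x ∈ A, ∀ k, g k x ≠ 0 ∧ s k = decide (0 < g k x)} with hT
      set g' : Fin n → E →ᵃ[ℝ] ℝ := fun k => g k.castSucc with hg'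
      -- restriction claim
      have claimA : ∀ s ∈ T, Fin.init s ∈
          {s : Fin n → Bool | ∃ x ∈ A, ∀ k, g' k x ≠ 0 ∧ s k = decide (0 < g' k x)} := by
        rintro s ⟨x, hxA, hx⟩
        exact ⟨x, hxA, fun k => ⟨(hx k.castSucc).1, (hx k.castSucc).2⟩⟩
      set TA : Set (Fin n → Bool) :=
        {s | ∃ x ∈ A, ∀ k, g' k x ≠ 0 ∧ s k = decide (0 < g' k x)} with hTA
      by_cases hD : ∃ r : Fin n → Bool, Fin.snoc r true ∈ T ∧ Fin.snoc r false ∈ T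
      · -- doubles exist
        obtain ⟨r₀, hr1, hr0⟩ := hD
        obtain ⟨p₀, hp₀A, hp₀⟩ := hr1
        obtain ⟨q₀, hq₀A, hq₀⟩ := hr0
        have hgp₀ : 0 < g (Fin.last n) p₀ := by
          have := (hp₀ (Fin.last n)).2
          rw [Fin.snoc_last] at this
          exact of_decide_eq_true this.symm
        have hgq₀ : g (Fin.last n) q₀ < 0 := by
          have h1 := (hq₀ (Fin.last n)).1
          have h2 := (hq₀ (Fin.last n)).2
          rw [Fin.snoc_last] at h2
          have := of_decide_eq_false h2.symm
          cases lt_or_gt_of_ne h1 with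
          | inl h => exact h
          | inr h => exact absurd h this
        -- the submodule K
        set K : Submodule ℝ E := A.direction ⊓ LinearMap.ker (g (Fin.last n)).linear with hK
        have hvmem : p₀ -ᵥ q₀ ∈ A.direction := AffineSubspace.vsub_mem_direction hp₀A hq₀A
        have hvlin : (g (Fin.last n)).linear (p₀ -ᵥ q₀) ≠ 0 := by
          rw [AffineMap.linearMap_vsub]
          simp only [vsub_eq_sub]
          linarith
        have hKlt : K < A.direction := by
          refine lt_of_le_of_ne inf_le_left fun hEq => ?_
          have : p₀ -ᵥ q₀ ∈ K := hEq ▸ hvmem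
          exact hvlin (this.2)
        have hKrank : finrank ℝ K < finrank ℝ A.direction :=
          Submodule.finrank_lt_finrank_of_lt hKlt
        obtain ⟨e, rfl⟩ : ∃ e, d = e + 1 := ⟨d - 1, by omega⟩
        -- the smaller affine subspace
        set A' : AffineSubspace ℝ E :=
          { carrier := {x | x ∈ A ∧ g (Fin.last n) x = 0}
            smul_vsub_vadd_mem' := by
              intro c p₁ p₂ p₃ h₁ h₂ h₃
              refine ⟨A.smul_vsub_vadd_mem c h₁.1 h₂.1 h₃.1, ?_⟩
              rw [AffineMap.map_vadd, LinearMap.map_smul, AffineMap.linearMap_vsub]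
              simp only [vsub_eq_sub, vadd_eq_add, h₁.2, h₂.2, h₃.2]
              simp } with hA'
        have hA'mem : ∀ x, x ∈ A' ↔ x ∈ A ∧ g (Fin.last n) x = 0 := fun x => Iff.rfl
        have hA'dir : A'.direction ≤ K := by
          refine le_inf (AffineSubspace.direction_le fun x hx => ((hA'mem x).mp hx).1) ?_
          rw [AffineSubspace.direction_eq_vectorSpan, vectorSpan_def]
          refine Submodule.span_le.mpr ?_
          rintro v ⟨y, hy, z, hz, rfl⟩
          simp only [SetLike.mem_coe, LinearMap.mem_ker, AffineMap.linearMap_vsub]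
          rw [((hA'mem y).mp hy).2, ((hA'mem z).mp hz).2]
          simp
        have hA'rank : finrank ℝ A'.direction ≤ e :=
          le_trans (Submodule.finrank_mono hA'dir) (by omega)
        set D : Set (Fin n → Bool) :=
          {s | ∃ x ∈ A', ∀ k, g' k x ≠ 0 ∧ s k = decide (0 < g' k x)} with hDdef
        -- claim B : doubles restrict to D
        have claimB : ∀ r : Fin n → Bool,
            Fin.snoc r true ∈ T → Fin.snoc r false ∈ T → r ∈ D := by
          intro r h1 h0
          obtain ⟨p, hpA, hp⟩ := h1
          obtain ⟨q, hqA, hq⟩ := h0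
          have hgp : 0 < g (Fin.last n) p := by
            have := (hp (Fin.last n)).2
            rw [Fin.snoc_last] at this
            exact of_decide_eq_true this.symm
          have hgq : g (Fin.last n) q < 0 := by
            have h1' := (hq (Fin.last n)).1
            have h2' := (hq (Fin.last n)).2
            rw [Fin.snoc_last] at h2'
            have := of_decide_eq_false h2'.symm
            cases lt_or_gt_of_ne h1' with
            | inl h => exact h
            | inr h => exact absurd h this
          set t : ℝ := g (Fin.last n) p / (g (Fin.last n) p - g (Fin.last n) q) with htdef
          have hden : 0 < g (Fin.last n) p - g (Fin.last n) q := by linarith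
          have ht0 : 0 < t := div_pos hgp hden
          have ht1 : t < 1 := (div_lt_one hden).mpr (by linarith)
          set x₀ : E := AffineMap.lineMap p q t with hx₀def
          have hx₀A : x₀ ∈ A := by
            rw [hx₀def, AffineMap.lineMap_apply]
            exact A.smul_vsub_vadd_mem t hqA hpA hpA
          have hval : ∀ k : Fin (n+1), g k x₀ = t * (g k q - g k p) + g k p := by
            intro k
            rw [hx₀def, AffineMap.apply_lineMap, AffineMap.lineMap_apply_module']
            simp only [smul_eq_mul]
          have hx₀last : g (Fin.last n) x₀ = 0 := by
            rw [hval, htdef]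
            field_simp
            ring
          refine ⟨x₀, (hA'mem x₀).mpr ⟨hx₀A, hx₀last⟩, fun k => ?_⟩
          have hpk1 := (hp k.castSucc).1
          have hpk2 := (hp k.castSucc).2
          have hqk1 := (hq k.castSucc).1
          have hqk2 := (hq k.castSucc).2
          rw [Fin.snoc_castSucc] at hpk2 hqk2
          have hvk := hval k.castSucc
          by_cases hsign : 0 < g k.castSucc p
          · have hrk : r k = true := by rw [hpk2, decide_eq_true_eq] ; exact hsign
            have hqpos : 0 < g k.castSucc q := by
              have : r k = decide (0 < g k.castSucc q) := hqk2
              rw [hrk] at this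
              exact of_decide_eq_true this.symm
            have hxpos : 0 < g' k x₀ := by
              rw [hg']; rw [hvk]; nlinarith
            exact ⟨ne_of_gt hxpos, by rw [hrk, eq_comm, decide_eq_true_eq]; exact hxpos⟩
          · have hpneg : g k.castSucc p < 0 := lt_of_le_of_ne (not_lt.mp hsign) hpk1
            have hrk : r k = false := by
              rw [hpk2, decide_eq_false_iff_not]; exact hsign
            have hqneg : g k.castSucc q < 0 := by
              have : r k = decide (0 < g k.castSucc q) := hqk2
              rw [hrk] at this
              have := of_decide_eq_false this.symm
              exact lt_of_le_of_ne (not_lt.mp this) hqk1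
            have hxneg : g' k x₀ < 0 := by
              rw [hg']; rw [hvk]; nlinarith
            refine ⟨ne_of_lt hxneg, by rw [hrk, eq_comm, decide_eq_false_iff_not]; exact not_lt.mpr hxneg.le⟩
        -- the injection
        set ψ : (Fin (n+1) → Bool) → ((Fin n → Bool) ⊕ (Fin n → Bool)) := fun s =>
          if s (Fin.last n) = true ∧ Fin.snoc (Fin.init s) false ∈ T then Sum.inr (Fin.init s)
          else Sum.inl (Fin.init s) with hψ
        have hmaps : ∀ s ∈ T, ψ s ∈ (Sum.inl '' TA) ∪ (Sum.inr '' D) := by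
          intro s hs
          by_cases hc : s (Fin.last n) = true ∧ Fin.snoc (Fin.init s) false ∈ T
          · right
            refine ⟨Fin.init s, ?_, by rw [hψ]; simp [hc]⟩
            refine claimB _ ?_ hc.2
            rw [← hc.1, Fin.snoc_init_self s]
            exact hs
          · left
            exact ⟨Fin.init s, claimA s hs, by rw [hψ]; simp [hc]⟩
        have key : ∀ w ∈ T, Fin.snoc (Fin.init w) (w (Fin.last n)) ∈ T := by
          intro w hw; rw [Fin.snoc_init_self]; exact hw
        have hinj : Set.InjOn ψ T := by
          intro s hs u hu heq
          rw [hψ] at heq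
          simp only at heq
          by_cases cs : s (Fin.last n) = true ∧ Fin.snoc (Fin.init s) false ∈ T <;>
            by_cases cu : u (Fin.last n) = true ∧ Fin.snoc (Fin.init u) false ∈ T
          · rw [if_pos cs, if_pos cu] at heq
            have h1 : Fin.init s = Fin.init u := Sum.inr.inj heq
            rw [← Fin.snoc_init_self s, ← Fin.snoc_init_self u, h1, cs.1, cu.1]
          · rw [if_pos cs, if_neg cu] at heq; exact absurd heq (by simp)
          · rw [if_neg cs, if_pos cu] at heq; exact absurd heq (by simp)
          · rw [if_neg cs, if_neg cu] at heq
            have h1 : Fin.init s = Fin.init u := Sum.inl.inj heq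
            have hlast : s (Fin.last n) = u (Fin.last n) := by
              by_contra hne
              rcases Bool.eq_false_or_eq_true (s (Fin.last n)) with hsl | hsl <;>
                rcases Bool.eq_false_or_eq_true (u (Fin.last n)) with hul | hul
              · exact hne (hsl.trans hul.symm)
              · -- s last = true, u last = false
                refine cs ⟨hsl, ?_⟩
                have := key u hu
                rw [hul, ← h1] at this
                exact this
              · -- s last = false, u last = true
                refine cu ⟨hul, ?_⟩
                have := key s hs
                rw [hsl, h1] at this
                exact this
              · exact hne (hsl.trans hul.symm)
            rw [← Fin.snoc_init_self s, ← Fin.snoc_init_self u, h1, hlast]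
        calc T.ncard ≤ ((Sum.inl '' TA) ∪ (Sum.inr '' D)).ncard :=
              Set.ncard_le_ncard_of_injOn ψ hmaps hinj (Set.toFinite _)
          _ ≤ (Sum.inl '' TA).ncard + (Sum.inr '' D).ncard := Set.ncard_union_le _ _
          _ = TA.ncard + D.ncard := by
              rw [Set.ncard_image_of_injective _ Sum.inl_injective,
                Set.ncard_image_of_injective _ Sum.inr_injective]
          _ ≤ (∑ i ∈ Finset.range (e+1+1), n.choose i) + ∑ i ∈ Finset.range (e+1), n.choose i :=
              Nat.add_le_add (ih g' (e+1) A hA) (ih g' e A' hA'rank)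
          _ = ∑ i ∈ Finset.range (e+1+1), (n+1).choose i := (pascal_sum n (e+1)).symm
      · -- no doubles : Fin.init is injective on T
        have key : ∀ w ∈ T, Fin.snoc (Fin.init w) (w (Fin.last n)) ∈ T := by
          intro w hw; rw [Fin.snoc_init_self]; exact hw
        have hinj : Set.InjOn (Fin.init) T := by
          intro s hs u hu heq
          have hlast : s (Fin.last n) = u (Fin.last n) := by
            by_contra hne
            rcases Bool.eq_false_or_eq_true (s (Fin.last n)) with hsl | hsl <;>
              rcases Bool.eq_false_or_eq_true (u (Fin.last n)) with hul | hul
            · exact hne (hsl.trans hul.symm)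
            · refine hD ⟨Fin.init s, ?_, ?_⟩
              · have := key s hs; rw [hsl] at this; exact this
              · have := key u hu; rw [hul, ← heq] at this; exact this
            · refine hD ⟨Fin.init s, ?_, ?_⟩
              · have := key u hu; rw [hul, ← heq] at this; exact this
              · have := key s hs; rw [hsl] at this; exact this
            · exact hne (hsl.trans hul.symm)
          rw [← Fin.snoc_init_self s, ← Fin.snoc_init_self u, heq, hlast]
        calc T.ncard ≤ TA.ncard :=
              Set.ncard_le_ncard_of_injOn Fin.init claimA hinj (Set.toFinite _)
          _ ≤ ∑ i ∈ Finset.range (d+1), n.choose i := ih g' d A hA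
          _ ≤ ∑ i ∈ Finset.range (d+1), (n+1).choose i := choose_sum_mono n d

/-- If an arrangement of `n` hyperplanes in `ℝ^m` separates a packing of `N` unit balls
(any two balls are separated by at least one hyperplane), then the number of balls is at
most the number of regions of the arrangement, and hence at most `∑_{i=0}^{m} C(n,i)`. -/
theorem separable_packing_card_le_regions (m n N : ℕ)
    (a : Fin n → EuclideanSpace ℝ (Fin m)) (b : Fin n → ℝ) (ha : ∀ k, a k ≠ 0)
    (c : Fin N → EuclideanSpace ℝ (Fin m))
    (hsep : ∀ i j : Fin N, i ≠ j → ∃ k,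
      (Metric.closedBall (c i) 1 ⊆ {x : EuclideanSpace ℝ (Fin m) | b k < ∑ l, a k l * x l} ∧
       Metric.closedBall (c j) 1 ⊆ {x : EuclideanSpace ℝ (Fin m) | ∑ l, a k l * x l < b k}) ∨
      (Metric.closedBall (c i) 1 ⊆ {x : EuclideanSpace ℝ (Fin m) | ∑ l, a k l * x l < b k} ∧
       Metric.closedBall (c j) 1 ⊆ {x : EuclideanSpace ℝ (Fin m) | b k < ∑ l, a k l * x l})) :
    N ≤ {C : Set (EuclideanSpace ℝ (Fin m)) |
          ∃ x ∈ {x : EuclideanSpace ℝ (Fin m) | ∀ k, ∑ l, a k l * x l ≠ b k},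
            C = connectedComponentIn
              {x : EuclideanSpace ℝ (Fin m) | ∀ k, ∑ l, a k l * x l ≠ b k} x}.ncard ∧
    N ≤ ∑ i ∈ Finset.range (m + 1), n.choose i := by
  classical
  -- the linear functionals
  set φ : Fin n → (EuclideanSpace ℝ (Fin m) →ₗ[ℝ] ℝ) := fun k =>
    { toFun := fun x => ∑ l, a k l * x l
      map_add' := by
        intro x y
        have h1 : ∀ l, a k l * (x + y) l = a k l * x l + a k l * y l := fun l => by
          show a k l * (x l + y l) = _; ring
        show (∑ l, a k l * (x + y) l) = (∑ l, a k l * x l) + ∑ l, a k l * y l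
        rw [Finset.sum_congr rfl fun l _ => h1 l, Finset.sum_add_distrib]
      map_smul' := by
        intro t x
        have h1 : ∀ l, a k l * (t • x) l = t * (a k l * x l) := fun l => by
          show a k l * (t * x l) = _; ring
        show (∑ l, a k l * (t • x) l) = (RingHom.id ℝ) t • ∑ l, a k l * x l
        rw [Finset.sum_congr rfl fun l _ => h1 l, ← Finset.mul_sum]
        simp } with hφ
  have hφ_apply : ∀ k x, φ k x = ∑ l, a k l * x l := fun k x => rfl
  -- the affine functionals
  set g : Fin n → (EuclideanSpace ℝ (Fin m) →ᵃ[ℝ] ℝ) := fun k =>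
    { toFun := fun x => ∑ l, a k l * x l - b k
      linear := φ k
      map_vadd' := by
        intro p v
        show (∑ l, a k l * (v + p) l) - b k = (∑ l, a k l * v l) +ᵥ ((∑ l, a k l * p l) - b k)
        have h1 : ∀ l, a k l * (v + p) l = a k l * v l + a k l * p l := fun l => by
          show a k l * (v l + p l) = _; ring
        rw [Finset.sum_congr rfl fun l _ => h1 l, Finset.sum_add_distrib, vadd_eq_add]
        ring } with hg
  have hg_apply : ∀ k x, g k x = ∑ l, a k l * x l - b k := fun k x => rfl
  set S : Set (EuclideanSpace ℝ (Fin m)) :=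
    {x : EuclideanSpace ℝ (Fin m) | ∀ k, ∑ l, a k l * x l ≠ b k} with hS
  -- each ball contains a point avoiding all hyperplanes
  have hpoint : ∀ i : Fin N, ∃ x, x ∈ Metric.closedBall (c i) 1 ∧ x ∈ S := by
    intro i
    by_contra hcon
    push_neg at hcon
    have hsub : Metric.ball (c i) 1 ⊆
        ⋃ k, {x : EuclideanSpace ℝ (Fin m) | ∑ l, a k l * x l = b k} := by
      intro x hx
      obtain ⟨k, hk⟩ := by
        have := hcon x (Metric.ball_subset_closedBall hx)
        rw [hS] at this
        simpa [Set.mem_setOf_eq, not_forall] using this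
      exact Set.mem_iUnion.mpr ⟨k, hk⟩
    have hzero : ∀ k : Fin n,
        MeasureTheory.volume {x : EuclideanSpace ℝ (Fin m) | ∑ l, a k l * x l = b k} = 0 := by
      intro k
      set Hk : AffineSubspace ℝ (EuclideanSpace ℝ (Fin m)) :=
        { carrier := {x : EuclideanSpace ℝ (Fin m) | ∑ l, a k l * x l = b k}
          smul_vsub_vadd_mem' := by
            intro t p₁ p₂ p₃ h₁ h₂ h₃
            simp only [Set.mem_setOf_eq] at h₁ h₂ h₃ ⊢
            have hptw : ∀ l, a k l * ((t • (p₁ -ᵥ p₂) +ᵥ p₃) l)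
                = t * (a k l * p₁ l) - t * (a k l * p₂ l) + a k l * p₃ l := fun l => by
              show a k l * (t * (p₁ l - p₂ l) + p₃ l) = _; ring
            rw [Finset.sum_congr rfl fun l _ => hptw l, Finset.sum_add_distrib,
              Finset.sum_sub_distrib, ← Finset.mul_sum, ← Finset.mul_sum, h₁, h₂, h₃]
            ring } with hHk
      have hne : Hk ≠ ⊤ := by
        obtain ⟨l₀, hl₀⟩ : ∃ l₀, a k l₀ ≠ 0 := by
          by_contra hall
          push_neg at hall
          exact ha k (by ext l; simpa using hall l)
        intro htop
        set y : EuclideanSpace ℝ (Fin m) :=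
          ((b k + 1) / a k l₀) • EuclideanSpace.single l₀ (1:ℝ) with hy_def
        have hy : y ∈ Hk := htop ▸ AffineSubspace.mem_top ℝ (EuclideanSpace ℝ (Fin m)) _
        have hterm : ∀ l, a k l * y l = if l = l₀ then b k + 1 else 0 := fun l => by
          show a k l * (((b k + 1) / a k l₀) * (EuclideanSpace.single l₀ (1:ℝ)) l) = _
          rw [EuclideanSpace.single_apply]
          by_cases h : l = l₀
          · subst h; rw [if_pos rfl, if_pos rfl]; field_simp
          · rw [if_neg h, if_neg h]; ring
        have hsum : (∑ l, a k l * y l) = b k + 1 := by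
          rw [Finset.sum_congr rfl fun l _ => hterm l,
            Finset.sum_ite_eq' Finset.univ l₀ (fun _ => b k + 1)]
          simp
        have hyH : (∑ l, a k l * y l) = b k := hy
        rw [hsum] at hyH
        linarith
      exact MeasureTheory.Measure.addHaar_affineSubspace
        (MeasureTheory.volume : MeasureTheory.Measure (EuclideanSpace ℝ (Fin m))) Hk hne
    have hU : MeasureTheory.volume
        (⋃ k, {x : EuclideanSpace ℝ (Fin m) | ∑ l, a k l * x l = b k}) = 0 :=
      MeasureTheory.measure_iUnion_null fun k => hzero k
    have hpos : 0 < MeasureTheory.volume (Metric.ball (c i) (1:ℝ)) :=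
      Metric.measure_ball_pos _ _ one_pos
    have hmono : MeasureTheory.volume (Metric.ball (c i) (1:ℝ)) ≤ MeasureTheory.volume
        (⋃ k, {x : EuclideanSpace ℝ (Fin m) | ∑ l, a k l * x l = b k}) :=
      MeasureTheory.measure_mono hsub
    rw [hU] at hmono
    exact absurd (le_antisymm hmono zero_le) (ne_of_gt hpos)
  choose x hx1 hx2 using hpoint
  have hxS : ∀ i, ∀ k, ∑ l, a k l * (x i) l ≠ b k := fun i => hx2 i
  -- sign facts from separation
  have hsign : ∀ i j : Fin N, i ≠ j → ∃ k,
      (b k < ∑ l, a k l * (x i) l ∧ ∑ l, a k l * (x j) l < b k) ∨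
      (∑ l, a k l * (x i) l < b k ∧ b k < ∑ l, a k l * (x j) l) := by
    intro i j hij
    obtain ⟨k, hk | hk⟩ := hsep i j hij
    · exact ⟨k, Or.inl ⟨hk.1 (hx1 i), hk.2 (hx1 j)⟩⟩
    · exact ⟨k, Or.inr ⟨hk.1 (hx1 i), hk.2 (hx1 j)⟩⟩
  -- continuity
  have hcont : ∀ k, Continuous fun y : EuclideanSpace ℝ (Fin m) => ∑ l, a k l * y l := fun k =>
    (φ k).continuous_of_finiteDimensional
  -- sign constancy on preconnected subsets of S
  have comp_sign : ∀ P : Set (EuclideanSpace ℝ (Fin m)), IsPreconnected P → P ⊆ S →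
      ∀ y ∈ P, ∀ z ∈ P, ∀ k,
      b k < ∑ l, a k l * (y l) → b k < ∑ l, a k l * (z l) := by
    intro P hP hPS y hy z hz k hyk
    by_contra hzk
    push_neg at hzk
    obtain ⟨w, hwP, hw⟩ := hP.intermediate_value₂ hz hy
      ((hcont k).continuousOn) (continuousOn_const) hzk (le_of_lt hyk)
    exact hPS hwP k hw
  constructor
  · -- region bound
    set ρ : Fin N → Set (EuclideanSpace ℝ (Fin m)) := fun i => connectedComponentIn S (x i)
      with hρ
    set R : Set (Set (EuclideanSpace ℝ (Fin m))) :=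
      {C | ∃ x₀ ∈ S, C = connectedComponentIn S x₀} with hR
    have hmaps : ∀ i : Fin N, i ∈ (Set.univ : Set (Fin N)) → ρ i ∈ R := fun i _ =>
      ⟨x i, hx2 i, rfl⟩
    have hinj : Set.InjOn ρ (Set.univ : Set (Fin N)) := by
      intro i _ j _ hij
      by_contra hne
      obtain ⟨k, hk | hk⟩ := hsign i j hne
      all_goals {
        have hxiP : x i ∈ ρ i := mem_connectedComponentIn (hx2 i)
        have hxjP : x j ∈ ρ i := by
          rw [hij]
          exact mem_connectedComponentIn (hx2 j)
        have hPre : IsPreconnected (ρ i) := isPreconnected_connectedComponentIn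
        have hPS : ρ i ⊆ S := connectedComponentIn_subset _ _
        first
        | exact absurd (comp_sign _ hPre hPS (x i) hxiP (x j) hxjP k hk.1) (not_lt.mpr hk.2.le)
        | exact absurd (comp_sign _ hPre hPS (x j) hxjP (x i) hxiP k hk.2) (not_lt.mpr hk.1.le) }
    -- R is finite via sign vectors
    have hτ : ∀ x₀, x₀ ∈ S → ∀ k,
        (∃ y ∈ connectedComponentIn S x₀, b k < ∑ l, a k l * y l) ↔
          (b k < ∑ l, a k l * x₀ l) := by
      intro x₀ hx₀ k
      constructor
      · rintro ⟨y, hy, hyk⟩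
        exact comp_sign _ isPreconnected_connectedComponentIn
          (connectedComponentIn_subset _ _) y hy x₀ (mem_connectedComponentIn hx₀) k hyk
      · intro h
        exact ⟨x₀, mem_connectedComponentIn hx₀, h⟩
    have hτinj : Set.InjOn
        (fun C : Set (EuclideanSpace ℝ (Fin m)) =>
          fun k : Fin n => decide (∃ y ∈ C, b k < ∑ l, a k l * y l)) R := by
      rintro C ⟨x₀, hx₀S, rfl⟩ C' ⟨x₁, hx₁S, rfl⟩ hCC
      have hsgn : ∀ k, (b k < ∑ l, a k l * x₀ l) ↔ (b k < ∑ l, a k l * x₁ l) := by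
        intro k
        have h5 := congrFun hCC k
        simp only [decide_eq_decide] at h5
        rw [← hτ x₀ hx₀S k, ← hτ x₁ hx₁S k]
        exact h5
      -- the convex cell containing both x₀ and x₁
      set P : Set (EuclideanSpace ℝ (Fin m)) := ⋂ k, (if b k < ∑ l, a k l * x₀ l
          then {y : EuclideanSpace ℝ (Fin m) | b k < ∑ l, a k l * y l}
          else {y : EuclideanSpace ℝ (Fin m) | ∑ l, a k l * y l < b k}) with hP
      have hPconv : Convex ℝ P := by
        refine convex_iInter fun k => ?_
        by_cases h : b k < ∑ l, a k l * x₀ l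
        · rw [if_pos h]; exact convex_halfSpace_gt (φ k).isLinear _
        · rw [if_neg h]; exact convex_halfSpace_lt (φ k).isLinear _
      have hPS : P ⊆ S := by
        intro y hy k
        have h6 := Set.mem_iInter.mp hy k
        by_cases h : b k < ∑ l, a k l * x₀ l
        · rw [if_pos h] at h6
          simp only [Set.mem_setOf_eq] at h6
          exact (ne_of_lt h6).symm
        · rw [if_neg h] at h6
          simp only [Set.mem_setOf_eq] at h6
          exact ne_of_lt h6
      have hx₀P : x₀ ∈ P := by
        refine Set.mem_iInter.mpr fun k => ?_
        by_cases h : b k < ∑ l, a k l * x₀ l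
        · rw [if_pos h]; exact h
        · rw [if_neg h]
          exact lt_of_le_of_ne (not_lt.mp h) (hx₀S k)
      have hx₁P : x₁ ∈ P := by
        refine Set.mem_iInter.mpr fun k => ?_
        by_cases h : b k < ∑ l, a k l * x₀ l
        · rw [if_pos h]; exact (hsgn k).mp h
        · rw [if_neg h]
          have h7 : ¬ b k < ∑ l, a k l * x₁ l := fun hc => h ((hsgn k).mpr hc)
          exact lt_of_le_of_ne (not_lt.mp h7) (hx₁S k)
      have hsub : P ⊆ connectedComponentIn S x₀ :=
        hPconv.isPreconnected.subset_connectedComponentIn hx₀P hPS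
      exact connectedComponentIn_eq (hsub hx₁P)
    have hRfin : R.Finite :=
      Set.Finite.of_finite_image (Set.toFinite _) hτinj
    calc (N : ℕ) = (Set.univ : Set (Fin N)).ncard := by simp [Set.ncard_univ]
      _ ≤ R.ncard := Set.ncard_le_ncard_of_injOn ρ hmaps hinj hRfin
  · -- numerical bound via realized sign vectors
    set T : Set (Fin n → Bool) :=
      {s | ∃ y ∈ (⊤ : AffineSubspace ℝ (EuclideanSpace ℝ (Fin m))), ∀ k,
        g k y ≠ 0 ∧ s k = decide (0 < g k y)} with hTdef
    have hmaps : ∀ i : Fin N, i ∈ (Set.univ : Set (Fin N)) →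
        (fun k => decide (0 < g k (x i))) ∈ T := by
      intro i _
      refine ⟨x i, AffineSubspace.mem_top ℝ (EuclideanSpace ℝ (Fin m)) _, fun k => ⟨?_, rfl⟩⟩
      rw [hg_apply]
      exact sub_ne_zero_of_ne (hxS i k)
    have hinj : Set.InjOn (fun i : Fin N => fun k => decide (0 < g k (x i)))
        (Set.univ : Set (Fin N)) := by
      intro i _ j _ hij
      by_contra hne
      obtain ⟨k, hk | hk⟩ := hsign i j hne
      all_goals {
        have h8 := congrFun hij k
        simp only [decide_eq_decide] at h8
        rw [hg_apply, hg_apply] at h8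
        first
        | exact absurd ((h8.mp) (by linarith [hk.1])) (by linarith [hk.2])
        | exact absurd ((h8.mpr) (by linarith [hk.2])) (by linarith [hk.1]) }
    have hrank : Module.finrank ℝ
        (⊤ : AffineSubspace ℝ (EuclideanSpace ℝ (Fin m))).direction ≤ m := by
      rw [AffineSubspace.direction_top, finrank_top]
      simp [finrank_euclideanSpace]
    calc (N : ℕ) = (Set.univ : Set (Fin N)).ncard := by simp [Set.ncard_univ]
      _ ≤ T.ncard := Set.ncard_le_ncard_of_injOn _ hmaps hinj (Set.toFinite _)
      _ ≤ ∑ i ∈ Finset.range (m + 1), n.choose i := realized_ncard_le n g m ⊤ hrank
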